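/- Let (X₁, X₂, Z) be a basis of R₁, let a, b ∈ ℂ, let q₂₁ ∈ R₂ be any quadratic form, and let q₁₂ ∈ R₂ be a quadratic form whose coefficient of Z² (in the monomial basis determined by (X₁, X₂, Z)) is zero. Then the determinant of the 3×3 matrix [[X₁, Z, 0],[a·X₂², q₁₂, Z],[q₂₁, b·X₁², X₂]] is the zero polynomial if and only if a = 0, b = 0, q₁₂ = 0 and q₂₁ = 0 (equivalently, the morphism of sheaves on the projective plane represented by this matrix is non-injective precisely when the 2×2 submatrix [[a·X₂², q₁₂],[q₂₁, b·X₁²]] vanishes). -/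

import Mathlib

open MvPolynomial Matrix

noncomputable section

/-- The polynomial ring `R = ℂ[x₀,x₁,x₂]`. -/
abbrev Rp : Type := MvPolynomial (Fin 3) ℂ

/-- `p` is a linear form. -/
def IsLin (p : Rp) : Prop := p.IsHomogeneous 1

/-- `p` is a quadratic form. -/
def IsQuad (p : Rp) : Prop := p.IsHomogeneous 2

lemma degree_one_classify (m : Fin 3 →₀ ℕ) (h : m.degree = 1) :
    ∃ j, m = Finsupp.single j 1 := by
  have hsum : m 0 + m 1 + m 2 = 1 := by
    have h2 : m.degree = ∑ i : Fin 3, m i := by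
      rw [Finsupp.degree]
      exact Finset.sum_subset (Finset.subset_univ _)
        (fun i _ hi => Finsupp.notMem_support_iff.mp hi)
    rw [h2, Fin.sum_univ_three] at h
    exact h
  have : (m 0 = 1 ∧ m 1 = 0 ∧ m 2 = 0) ∨ (m 0 = 0 ∧ m 1 = 1 ∧ m 2 = 0)
      ∨ (m 0 = 0 ∧ m 1 = 0 ∧ m 2 = 1) := by omega
  rcases this with ⟨h0,h1,h2⟩|⟨h0,h1,h2⟩|⟨h0,h1,h2⟩
  · exact ⟨0, by ext i; fin_cases i <;> simp [Finsupp.single_apply, h0, h1, h2]⟩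
  · exact ⟨1, by ext i; fin_cases i <;> simp [Finsupp.single_apply, h0, h1, h2]⟩
  · exact ⟨2, by ext i; fin_cases i <;> simp [Finsupp.single_apply, h0, h1, h2]⟩

lemma lin_expand (p : Rp) (hp : p.IsHomogeneous 1) :
    p = ∑ j : Fin 3, C (coeff (Finsupp.single j 1) p) * X j := by
  apply MvPolynomial.ext; intro m
  rw [coeff_sum]
  simp only [coeff_C_mul, coeff_X']
  by_cases hm : m.degree = 1
  · obtain ⟨j, rfl⟩ := degree_one_classify m hm
    rw [Finset.sum_eq_single j]
    · simp
    · intro k _ hk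
      rw [if_neg, mul_zero]
      simp [Finsupp.single_eq_single_iff, hk]
    · simp
  · rw [hp.coeff_eq_zero hm]
    symm
    apply Finset.sum_eq_zero
    intro k _
    rw [if_neg, mul_zero]
    intro hkm
    apply hm
    rw [← hkm]
    simp [Finsupp.degree_single]

lemma sum_C_mul_X_comp (A B : Matrix (Fin 3) (Fin 3) ℂ) (i : Fin 3) :
    (∑ j, C (A i j) * (∑ k, C (B j k) * X k) : Rp) = ∑ k, C ((A * B) i k) * X k := by
  simp only [Finset.mul_sum, Matrix.mul_apply, map_sum, Finset.sum_mul, ← mul_assoc, ← C_mul]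
  exact Finset.sum_comm

lemma sum_C_one (i : Fin 3) :
    (∑ k, C ((1 : Matrix (Fin 3) (Fin 3) ℂ) i k) * X k : Rp) = X i := by
  simp [Matrix.one_apply]

lemma unit_of_indep (G : Fin 3 → Rp) (hGhom : ∀ i, (G i).IsHomogeneous 1)
    (hind : LinearIndependent ℂ G) :
    IsUnit (Matrix.of fun i j => coeff (Finsupp.single j 1) (G i)) := by
  rw [← Matrix.linearIndependent_rows_iff_isUnit]
  rw [Fintype.linearIndependent_iff]
  intro g hg i
  have hG0 : ∑ i, g i • G i = 0 := by
    have hexp : ∀ i, G i = ∑ j, C (coeff (Finsupp.single j 1) (G i)) * X j :=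
      fun i => lin_expand _ (hGhom i)
    calc ∑ i, g i • G i
        = ∑ i, ∑ j, C (g i * coeff (Finsupp.single j 1) (G i)) * X j := by
          refine Finset.sum_congr rfl fun i _ => ?_
          conv_lhs => rw [hexp i]
          rw [Finset.smul_sum]
          refine Finset.sum_congr rfl fun j _ => ?_
          rw [smul_eq_C_mul, _root_.map_mul, mul_assoc]
      _ = ∑ j, C (∑ i, g i * coeff (Finsupp.single j 1) (G i)) * X j := by
          rw [Finset.sum_comm]
          refine Finset.sum_congr rfl fun j _ => ?_
          rw [map_sum, Finset.sum_mul]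
      _ = 0 := by
          refine Finset.sum_eq_zero fun j _ => ?_
          have := congr_fun hg j
          simp only [Finset.sum_apply, Pi.smul_apply, Matrix.row_apply, Matrix.of_apply, smul_eq_mul,
            Pi.zero_apply] at this
          rw [this, map_zero, zero_mul]
  exact (Fintype.linearIndependent_iff.mp hind) g hG0 i

lemma concrete (a b c₀ c₁ c₂ c₃ c₄ : ℂ) (p : Rp)
    (hE : X 0 * (C c₀ * X 0 ^ 2 + C c₁ * (X 0 * X 1) + C c₂ * (X 0 * X 2)
        + C c₃ * X 1 ^ 2 + C c₄ * (X 1 * X 2)) * X 1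
      - C b * X 0 ^ 3 * X 2 - C a * X 1 ^ 3 * X 2 + X 2 ^ 2 * p = 0) :
    a = 0 ∧ b = 0 ∧ c₀ = 0 ∧ c₁ = 0 ∧ c₂ = 0 ∧ c₃ = 0 ∧ c₄ = 0 ∧ p = 0 := by
  have h1 : Polynomial.C c₀ * Polynomial.X ^ 8 + Polynomial.C c₁ * Polynomial.X ^ 12
      + Polynomial.C c₃ * Polynomial.X ^ 16 = 0 := by
    have h := congrArg (aeval ![(Polynomial.X : Polynomial ℂ), Polynomial.X ^ 5, 0]) hE
    simp only [map_add, map_sub, _root_.map_mul, map_pow, aeval_X, aeval_C,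
      Polynomial.algebraMap_eq, Matrix.cons_val_zero, Matrix.cons_val_one, Matrix.head_cons,
      Matrix.cons_val_two, Matrix.tail_cons, map_zero] at h
    linear_combination h
  have h2 : Polynomial.C c₂ * Polynomial.X ^ 7 + Polynomial.C c₄ * Polynomial.X ^ 11
      - Polynomial.C b * Polynomial.X ^ 3 - Polynomial.C a * Polynomial.X ^ 15 = 0 := by
    have h := congrArg (fun r : Rp =>
        aeval ![(Polynomial.X : Polynomial ℂ), Polynomial.X ^ 5, 0] (pderiv 2 r)) hE
    simp only [map_add, map_sub, _root_.map_mul, map_pow, pderiv_mul, pderiv_pow, pderiv_C,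
      pderiv_X_self, pderiv_X_of_ne (show (0:Fin 3) ≠ 2 by decide),
      pderiv_X_of_ne (show (1:Fin 3) ≠ 2 by decide),
      aeval_X, aeval_C, Polynomial.algebraMap_eq, Matrix.cons_val_zero, Matrix.cons_val_one,
      Matrix.head_cons, Matrix.cons_val_two, Matrix.tail_cons, map_zero,
      mul_zero, zero_mul, add_zero, zero_add, mul_one, _root_.map_one, zero_pow, pow_one,
      Nat.sub_self] at h
    linear_combination h
  have e8 := congrArg (fun f => Polynomial.coeff f 8) h1
  have e12 := congrArg (fun f => Polynomial.coeff f 12) h1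
  have e16 := congrArg (fun f => Polynomial.coeff f 16) h1
  have e7 := congrArg (fun f => Polynomial.coeff f 7) h2
  have e11 := congrArg (fun f => Polynomial.coeff f 11) h2
  have e3 := congrArg (fun f => Polynomial.coeff f 3) h2
  have e15 := congrArg (fun f => Polynomial.coeff f 15) h2
  simp only [Polynomial.coeff_add, Polynomial.coeff_sub, Polynomial.coeff_C_mul,
    Polynomial.coeff_X_pow, Polynomial.coeff_zero] at e8 e12 e16 e7 e11 e3 e15
  norm_num at e8 e12 e16 e7 e11 e3 e15
  refine ⟨e15, e3, e8, e12, e7, e16, e11, ?_⟩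
  rw [e8, e12, e7, e16, e11, e3, e15] at hE
  simp only [map_zero, zero_mul, mul_zero, add_zero, zero_add, sub_zero, zero_sub,
    neg_zero] at hE
  rcases mul_eq_zero.mp hE with h | h
  · exact absurd h (pow_ne_zero _ (MvPolynomial.X_ne_zero _))
  · exact h

theorem stmt8 (X₁ X₂ Z : Rp) (hX₁ : IsLin X₁) (hX₂ : IsLin X₂) (hZ : IsLin Z)
    (hbasis : LinearIndependent ℂ ![X₁, X₂, Z]) (a b : ℂ)
    (q₁₂ q₂₁ : Rp) (hq₂₁ : IsQuad q₂₁)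
    (hq₁₂ : q₁₂ ∈ Submodule.span ℂ ({X₁^2, X₁*X₂, X₁*Z, X₂^2, X₂*Z} : Set Rp)) :
    (!![X₁, Z, 0; C a * X₂^2, q₁₂, Z; q₂₁, C b * X₁^2, X₂]).det = 0 ↔
      (a = 0 ∧ b = 0 ∧ q₁₂ = 0 ∧ q₂₁ = 0) := by
  constructor
  · intro hdet
    classical
    set G : Fin 3 → Rp := ![X₁, X₂, Z] with hGdef
    have hGhom : ∀ i, (G i).IsHomogeneous 1 := by
      intro i
      fin_cases i
      · exact hX₁
      · exact hX₂
      · exact hZ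
    set M : Matrix (Fin 3) (Fin 3) ℂ :=
      Matrix.of fun i j => coeff (Finsupp.single j 1) (G i) with hMdef
    have hM : IsUnit M := unit_of_indep G hGhom hbasis
    have hdetM : IsUnit M.det := (Matrix.isUnit_iff_isUnit_det M).mp hM
    set N := M⁻¹ with hNdef
    have hMN : M * N = 1 := Matrix.mul_nonsing_inv M hdetM
    have hNM : N * M = 1 := Matrix.nonsing_inv_mul M hdetM
    have hexp : ∀ i, G i = ∑ j, C (M i j) * X j := fun i => lin_expand _ (hGhom i)
    set φ : Rp →ₐ[ℂ] Rp := aeval G with hφdef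
    set ψ : Rp →ₐ[ℂ] Rp := aeval (fun i => ∑ j, C (N i j) * X j) with hψdef
    have hφψ : ∀ r, φ (ψ r) = r := by
      have : φ.comp ψ = AlgHom.id ℂ Rp := by
        apply MvPolynomial.algHom_ext
        intro i
        rw [AlgHom.comp_apply, AlgHom.id_apply, hψdef, aeval_X, map_sum]
        simp only [_root_.map_mul, aeval_C, aeval_X, MvPolynomial.algebraMap_eq, hφdef]
        calc ∑ j, C (N i j) * G j
            = ∑ j, C (N i j) * (∑ k, C (M j k) * X k) := by
              exact Finset.sum_congr rfl fun j _ => by rw [← hexp j]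
          _ = ∑ k, C ((N * M) i k) * X k := sum_C_mul_X_comp N M i
          _ = X i := by rw [hNM]; exact sum_C_one i
      intro r
      exact DFunLike.congr_fun this r
    have hψφ : ∀ r, ψ (φ r) = r := by
      have : ψ.comp φ = AlgHom.id ℂ Rp := by
        apply MvPolynomial.algHom_ext
        intro i
        rw [AlgHom.comp_apply, AlgHom.id_apply, hφdef, aeval_X, hexp i, map_sum]
        simp only [_root_.map_mul, aeval_C, aeval_X, MvPolynomial.algebraMap_eq, hψdef]
        calc ∑ j, C (M i j) * (∑ k, C (N j k) * X k)
            = ∑ k, C ((M * N) i k) * X k := sum_C_mul_X_comp M N i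
          _ = X i := by rw [hMN]; exact sum_C_one i
      intro r
      exact DFunLike.congr_fun this r
    have hφinj : Function.Injective φ := Function.LeftInverse.injective hψφ
    have hXeq0 : X₁ = φ (X 0) := by rw [hφdef, aeval_X]; rfl
    have hXeq1 : X₂ = φ (X 1) := by rw [hφdef, aeval_X]; rfl
    have hXeq2 : Z = φ (X 2) := by rw [hφdef, aeval_X]; rfl
    -- decompose q₁₂
    rw [Submodule.mem_span_insert] at hq₁₂
    obtain ⟨c₀, r₁, hr₁, hq⟩ := hq₁₂
    rw [Submodule.mem_span_insert] at hr₁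
    obtain ⟨c₁, r₂, hr₂, rfl⟩ := hr₁
    rw [Submodule.mem_span_insert] at hr₂
    obtain ⟨c₂, r₃, hr₃, rfl⟩ := hr₂
    rw [Submodule.mem_span_insert] at hr₃
    obtain ⟨c₃, r₄, hr₄, rfl⟩ := hr₃
    rw [Submodule.mem_span_singleton] at hr₄
    obtain ⟨c₄, rfl⟩ := hr₄
    set p : Rp := ψ q₂₁ with hpdef
    have hp : φ p = q₂₁ := hφψ q₂₁
    rw [Matrix.det_fin_three] at hdet
    norm_num [Matrix.cons_val_zero, Matrix.cons_val_one, Matrix.head_cons,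
      Matrix.cons_val_two, Matrix.tail_cons, Matrix.of_apply, Matrix.cons_val',
      Matrix.head_fin_const, Matrix.empty_val', Matrix.cons_val_fin_one] at hdet
    have hE : X 0 * (C c₀ * X 0 ^ 2 + C c₁ * (X 0 * X 1) + C c₂ * (X 0 * X 2)
        + C c₃ * X 1 ^ 2 + C c₄ * (X 1 * X 2)) * X 1
        - C b * X 0 ^ 3 * X 2 - C a * X 1 ^ 3 * X 2 + X 2 ^ 2 * p = 0 := by
      apply hφinj
      rw [map_zero]
      simp only [map_add, map_sub, _root_.map_mul, map_pow, aeval_C,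
        MvPolynomial.algebraMap_eq, hφdef]
      rw [← hφdef, ← hXeq0, ← hXeq1, ← hXeq2, hp]
      rw [hq] at hdet
      simp only [smul_eq_C_mul] at hdet
      linear_combination hdet
    obtain ⟨ha, hb, h0, h1, h2, h3, h4, hp0⟩ :=
      concrete a b c₀ c₁ c₂ c₃ c₄ p hE
    refine ⟨ha, hb, ?_, ?_⟩
    · rw [hq, h0, h1, h2, h3, h4]
      simp
    · rw [← hp, hp0, map_zero]
  · rintro ⟨rfl, rfl, rfl, rfl⟩
    rw [Matrix.det_fin_three]
    norm_num [Matrix.cons_val_zero, Matrix.cons_val_one, Matrix.head_cons,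
      Matrix.cons_val_two, Matrix.tail_cons, Matrix.of_apply, Matrix.cons_val',
      Matrix.head_fin_const, Matrix.empty_val', Matrix.cons_val_fin_one,
      Matrix.vecHead, Matrix.vecTail]
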